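/- For every integer d ≥ 2, every integer n ≥ 1 and every unit vector ψ ∈ ℂ^{d^n}, the magic satisfies M(ψ)² · (Σ_a |tr(P_a · ψψ†)|⁴) ≥ dⁿ, where the sum ranges over all d^{2n} Pauli strings a; equivalently, M(ψ) ≥ d^{n/2} / (Σ_a |tr(P_a · ψψ†)|⁴)^{1/2}. -/

import Mathlib

/-- `ζ = exp(2πi/d)`, a primitive `d`-th root of unity. -/
noncomputable def zeta (d : ℕ) : ℂ := Complex.exp (2 * Real.pi * Complex.I / d)

/-- The qudit shift matrix `X`: `X j k = 1` if `j = k + 1`, else `0`. -/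
def pauliX (d : ℕ) : Matrix (ZMod d) (ZMod d) ℂ :=
  Matrix.of fun j k => if j = k + 1 then 1 else 0

/-- The qudit clock matrix `Z`: diagonal with `Z j j = ζ^j`. -/
noncomputable def pauliZ (d : ℕ) : Matrix (ZMod d) (ZMod d) ℂ :=
  Matrix.of fun j k => if j = k then zeta d ^ j.val else 0

/-- The Pauli string `P_a = ⊗_{i=1}^n X^{l_i} Z^{m_i}` associated to
`a = ((l₁,m₁),…,(lₙ,mₙ))`, realized as a Kronecker product: a `d^n × d^n`
matrix with rows and columns indexed by functions `Fin n → ZMod d`. -/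
noncomputable def pauliString (d n : ℕ) [NeZero d] (a : Fin n → ZMod d × ZMod d) :
    Matrix (Fin n → ZMod d) (Fin n → ZMod d) ℂ :=
  Matrix.of fun f g =>
    ∏ i, (pauliX d ^ ((a i).1.val) * pauliZ d ^ ((a i).2.val)) (f i) (g i)

/-- The rank-one outer product `ψψ†`. -/
def outerProd {ι : Type*} (ψ : ι → ℂ) : Matrix ι ι ℂ :=
  Matrix.of fun f g => ψ f * star (ψ g)

lemma zeta_prim (d : ℕ) [NeZero d] : IsPrimitiveRoot (zeta d) d :=
  Complex.isPrimitiveRoot_exp d (NeZero.ne d)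

lemma pauliX_pow (d : ℕ) [NeZero d] (l : ℕ) (j k : ZMod d) :
    (pauliX d ^ l) j k = if j = k + (l : ZMod d) then 1 else 0 := by
  induction l generalizing j k with
  | zero => simp [Matrix.one_apply, eq_comm]
  | succ l ih =>
    rw [pow_succ', Matrix.mul_apply]
    simp only [ih]
    rw [Finset.sum_eq_single (k + (l : ZMod d))]
    · rw [if_pos rfl, mul_one, Nat.cast_add, Nat.cast_one, ← add_assoc]
      simp [pauliX]
    · intro c _ hc; simp [hc]
    · simp

lemma pauliZ_pow (d : ℕ) [NeZero d] (m : ℕ) (j k : ZMod d) :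
    (pauliZ d ^ m) j k = if j = k then zeta d ^ (m * k.val) else 0 := by
  induction m generalizing j k with
  | zero => simp [Matrix.one_apply]
  | succ m ih =>
    rw [pow_succ, Matrix.mul_apply]
    rw [Finset.sum_eq_single k]
    · rw [ih]
      by_cases h : j = k
      · simp [h, pauliZ, Nat.succ_mul, pow_add]
      · simp [h]
    · intro c _ hc; simp [pauliZ, hc]
    · simp

lemma pauliXZ_entry (d : ℕ) [NeZero d] (l m : ℕ) (j k : ZMod d) :
    (pauliX d ^ l * pauliZ d ^ m) j k
      = if j = k + (l : ZMod d) then zeta d ^ (m * k.val) else 0 := by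
  rw [Matrix.mul_apply]
  simp only [pauliX_pow, pauliZ_pow]
  rw [Finset.sum_eq_single k]
  · simp
  · intro c _ hc; simp [hc]
  · simp

lemma conj_zeta (d : ℕ) : (starRingEnd ℂ) (zeta d) = (zeta d)⁻¹ := by
  rw [zeta, ← Complex.exp_conj, ← Complex.exp_neg]
  congr 1
  simp only [map_div₀, map_mul, Complex.conj_I, Complex.conj_ofNat, map_natCast,
    Complex.conj_ofReal]
  ring

lemma sum_zmod_val {d : ℕ} [NeZero d] (f : ℕ → ℂ) :
    ∑ m : ZMod d, f m.val = ∑ i ∈ Finset.range d, f i := by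
  refine Finset.sum_nbij' (fun m => m.val) (fun i => (i : ZMod d)) ?_ ?_ ?_ ?_ ?_
  · intro a _; exact Finset.mem_range.mpr a.val_lt
  · intro a _; exact Finset.mem_univ _
  · intro a _; simp [ZMod.natCast_val, ZMod.cast_id]
  · intro a ha; exact ZMod.val_cast_of_lt (Finset.mem_range.mp ha)
  · intro a _; rfl

lemma zeta_ne_zero (d : ℕ) : zeta d ≠ 0 := Complex.exp_ne_zero _

lemma zeta_geom (d : ℕ) [NeZero d] (k k' : ZMod d) :
    ∑ m : ZMod d, zeta d ^ (m.val * k.val) * (starRingEnd ℂ) (zeta d ^ (m.val * k'.val))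
      = if k = k' then (d : ℂ) else 0 := by
  have hprim := zeta_prim d
  set ω : ℂ := zeta d ^ k.val * (zeta d)⁻¹ ^ k'.val with hω
  have hsummand : ∀ m : ZMod d,
      zeta d ^ (m.val * k.val) * (starRingEnd ℂ) (zeta d ^ (m.val * k'.val)) = ω ^ m.val := by
    intro m
    rw [map_pow, conj_zeta, mul_comm m.val, mul_comm m.val, pow_mul, pow_mul, ← mul_pow]
  have hωd : ω ^ d = 1 := by
    rw [hω, mul_pow, ← pow_mul, ← pow_mul, mul_comm _ d, mul_comm _ d, pow_mul, pow_mul,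
      hprim.pow_eq_one, inv_pow, hprim.pow_eq_one]
    simp
  have hωiff : ω = 1 ↔ k = k' := by
    rw [hω, inv_pow, ← zpow_natCast, ← zpow_natCast, ← zpow_neg, ← zpow_add₀ (zeta_ne_zero d),
      hprim.zpow_eq_one_iff_dvd]
    rw [← ZMod.intCast_zmod_eq_zero_iff_dvd]
    push_cast
    rw [← sub_eq_add_neg, sub_eq_zero, ZMod.natCast_val, ZMod.natCast_val,
      ZMod.cast_id, ZMod.cast_id]
  simp only [hsummand]
  rw [sum_zmod_val (fun i => ω ^ i)]
  by_cases h : k = k'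
  · rw [if_pos h]
    have : ω = 1 := hωiff.mpr h
    simp [this]
  · rw [if_neg h]
    have hω1 : ω ≠ 1 := fun hc => h (hωiff.mp hc)
    rw [geom_sum_eq hω1, hωd]
    simp

lemma shift_sum (d : ℕ) [NeZero d] (j k j' k' : ZMod d) :
    ∑ l : ZMod d, (if j = k + l then (1:ℂ) else 0) * (if j' = k' + l then 1 else 0)
      = if j - k = j' - k' then 1 else 0 := by
  have h1 : ∀ l : ZMod d, (j = k + l) = (l = j - k) := by
    intro l; rw [eq_iff_iff]
    constructor
    · intro h; rw [h]; ring
    · intro h; rw [h]; ring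
  have h2 : ∀ l : ZMod d, (j' = k' + l) = (l = j' - k') := by
    intro l; rw [eq_iff_iff]
    constructor
    · intro h; rw [h]; ring
    · intro h; rw [h]; ring
  simp only [h1, h2, ite_mul, one_mul, zero_mul]
  rw [Finset.sum_ite_eq' Finset.univ (j - k) (fun l => if l = j' - k' then (1:ℂ) else 0)]
  simp

lemma site_sum (d : ℕ) [NeZero d] (j k j' k' : ZMod d) :
    ∑ p : ZMod d × ZMod d,
      (pauliX d ^ p.1.val * pauliZ d ^ p.2.val) j k *
        (starRingEnd ℂ) ((pauliX d ^ p.1.val * pauliZ d ^ p.2.val) j' k')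
      = if j = j' ∧ k = k' then (d : ℂ) else 0 := by
  have key : ∀ p : ZMod d × ZMod d,
      (pauliX d ^ p.1.val * pauliZ d ^ p.2.val) j k *
        (starRingEnd ℂ) ((pauliX d ^ p.1.val * pauliZ d ^ p.2.val) j' k')
      = ((if j = k + p.1 then (1:ℂ) else 0) * (if j' = k' + p.1 then 1 else 0)) *
        (zeta d ^ (p.2.val * k.val) * (starRingEnd ℂ) (zeta d ^ (p.2.val * k'.val))) := by
    intro p
    rw [pauliXZ_entry, pauliXZ_entry, ZMod.natCast_val, ZMod.cast_id]
    by_cases h1 : j = k + p.1 <;> by_cases h2 : j' = k' + p.1 <;> simp [h1, h2]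
  simp only [key]
  rw [Fintype.sum_prod_type]
  dsimp only
  rw [← Finset.sum_mul_sum (f := fun x : ZMod d =>
    (if j = k + x then (1:ℂ) else 0) * (if j' = k' + x then 1 else 0)), shift_sum, zeta_geom]
  by_cases hk : k = k'
  · by_cases hf : j - k = j' - k'
    · have hj : j = j' := by rwa [hk, sub_left_inj] at hf
      simp [hf, hk, hj]
    · have : ¬(j = j' ∧ k = k') := by
        rintro ⟨hj, _⟩; exact hf (by rw [hj, hk])
      simp [hf, this]
  · have : ¬(j = j' ∧ k = k') := fun h => hk h.2
    simp [hk, this]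

lemma pauli_orth (d n : ℕ) [NeZero d] (f g f' g' : Fin n → ZMod d) :
    ∑ a : Fin n → ZMod d × ZMod d,
      pauliString d n a f g * (starRingEnd ℂ) (pauliString d n a f' g')
      = if f = f' ∧ g = g' then ((d : ℂ) ^ n) else 0 := by
  simp only [pauliString, Matrix.of_apply, map_prod, ← Finset.prod_mul_distrib]
  rw [← Fintype.piFinset_univ,
    ← Finset.prod_univ_sum (fun _ : Fin n => (Finset.univ : Finset (ZMod d × ZMod d)))
      (fun i p => (pauliX d ^ p.1.val * pauliZ d ^ p.2.val) (f i) (g i) *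
        (starRingEnd ℂ) ((pauliX d ^ p.1.val * pauliZ d ^ p.2.val) (f' i) (g' i)))]
  simp only [site_sum]
  by_cases h : f = f' ∧ g = g'
  · obtain ⟨h1, h2⟩ := h
    subst h1; subst h2
    simp
  · rw [if_neg h]
    have : ∃ i, ¬(f i = f' i ∧ g i = g' i) := by
      by_contra hc
      push_neg at hc
      exact h ⟨funext fun i => (hc i).1, funext fun i => (hc i).2⟩
    obtain ⟨i, hi⟩ := this
    exact Finset.prod_eq_zero (Finset.mem_univ i) (if_neg hi)

lemma trace_formula (d n : ℕ) [NeZero d] (ψ : (Fin n → ZMod d) → ℂ)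
    (a : Fin n → ZMod d × ZMod d) :
    (pauliString d n a * outerProd ψ).trace
      = ∑ x : (Fin n → ZMod d) × (Fin n → ZMod d),
          pauliString d n a x.1 x.2 * (ψ x.2 * (starRingEnd ℂ) (ψ x.1)) := by
  rw [Fintype.sum_prod_type]
  simp [Matrix.trace, Matrix.diag, Matrix.mul_apply, outerProd, Complex.star_def]

lemma sum_abs_sq (d n : ℕ) [NeZero d] (ψ : (Fin n → ZMod d) → ℂ)
    (hψ : ∑ f, ‖ψ f‖ ^ 2 = 1) :
    ∑ a : Fin n → ZMod d × ZMod d,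
      ‖(pauliString d n a * outerProd ψ).trace‖ ^ 2 = (d : ℝ) ^ n := by
  set w : (Fin n → ZMod d) × (Fin n → ZMod d) → ℂ :=
    fun x => ψ x.2 * (starRingEnd ℂ) (ψ x.1) with hw
  set T : (Fin n → ZMod d × ZMod d) → ℂ :=
    fun a => (pauliString d n a * outerProd ψ).trace with hT
  have hψ' : ∑ f, Complex.normSq (ψ f) = 1 := by
    rw [← hψ]; exact Finset.sum_congr rfl fun f _ => (Complex.sq_norm (ψ f)).symm
  have hcx : ∑ a : Fin n → ZMod d × ZMod d, T a * (starRingEnd ℂ) (T a) = ((d : ℂ)) ^ n := by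
    calc ∑ a : Fin n → ZMod d × ZMod d, T a * (starRingEnd ℂ) (T a)
        = ∑ a : Fin n → ZMod d × ZMod d, ∑ x, ∑ y, (w x * (starRingEnd ℂ) (w y)) *
            (pauliString d n a x.1 x.2 * (starRingEnd ℂ) (pauliString d n a y.1 y.2)) := by
          refine Finset.sum_congr rfl fun a _ => ?_
          show (pauliString d n a * outerProd ψ).trace *
            (starRingEnd ℂ) (pauliString d n a * outerProd ψ).trace = _
          rw [trace_formula, map_sum, Finset.sum_mul_sum]
          refine Finset.sum_congr rfl fun x _ => Finset.sum_congr rfl fun y _ => ?_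
          rw [map_mul]
          ring
      _ = ∑ x, ∑ y, (w x * (starRingEnd ℂ) (w y)) *
            ∑ a : Fin n → ZMod d × ZMod d,
              pauliString d n a x.1 x.2 * (starRingEnd ℂ) (pauliString d n a y.1 y.2) := by
          rw [Finset.sum_comm]
          refine Finset.sum_congr rfl fun x _ => ?_
          rw [Finset.sum_comm]
          exact Finset.sum_congr rfl fun y _ => (Finset.mul_sum _ _ _).symm
      _ = ∑ x, (w x * (starRingEnd ℂ) (w x)) * (d : ℂ) ^ n := by
          refine Finset.sum_congr rfl fun x _ => ?_
          simp only [pauli_orth]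
          rw [Finset.sum_eq_single x]
          · simp
          · intro y _ hy
            rw [if_neg, mul_zero]
            rintro ⟨h1, h2⟩
            exact hy (Prod.ext h1.symm h2.symm)
          · intro hx; exact absurd (Finset.mem_univ x) hx
      _ = (d : ℂ) ^ n := by
          rw [← Finset.sum_mul]
          have : ∑ x, w x * (starRingEnd ℂ) (w x) = 1 := by
            have : ∀ x : (Fin n → ZMod d) × (Fin n → ZMod d),
                w x * (starRingEnd ℂ) (w x) = ((Complex.normSq (ψ x.1) : ℂ)) *
                  ((Complex.normSq (ψ x.2) : ℂ)) := by
              intro x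
              rw [hw]
              simp only [map_mul, Complex.conj_conj]
              rw [show ψ x.2 * (starRingEnd ℂ) (ψ x.1) *
                    ((starRingEnd ℂ) (ψ x.2) * ψ x.1)
                  = (ψ x.1 * (starRingEnd ℂ) (ψ x.1)) *
                    (ψ x.2 * (starRingEnd ℂ) (ψ x.2)) by ring,
                Complex.mul_conj, Complex.mul_conj]
            simp only [this]
            rw [Fintype.sum_prod_type]
            dsimp only
            rw [← Finset.sum_mul_sum]
            rw [show ∑ f, ((Complex.normSq (ψ f) : ℂ)) = ((1:ℝ) : ℂ) by
              rw [← hψ']; push_cast; rfl]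
            simp
          rw [this, one_mul]
  have habs : ∀ a : Fin n → ZMod d × ZMod d,
      ‖T a‖ ^ 2 = Complex.normSq (T a) := fun a => Complex.sq_norm _
  simp only [Complex.sq_norm]
  have : ((∑ a : Fin n → ZMod d × ZMod d, Complex.normSq (T a) : ℝ) : ℂ) = (((d:ℝ)^n : ℝ) : ℂ) := by
    push_cast
    rw [← hcx]
    exact Finset.sum_congr rfl fun a _ => (Complex.mul_conj (T a)).symm
  exact_mod_cast this

/-- For every integer `d ≥ 2`, every `n ≥ 1` and every unit vector
`ψ ∈ ℂ^{d^n}`, the L₁-norm magic `M(ψ) = d^{−n} Σ_a |tr(P_a ψψ†)|` satisfies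
`M(ψ)² · (Σ_a |tr(P_a ψψ†)|⁴) ≥ dⁿ`, the sums over all `d^{2n}` Pauli strings `a`. -/
theorem magic_sq_mul_fourth_moment_ge (d n : ℕ) [NeZero d] (hd : 2 ≤ d) (hn : 1 ≤ n)
    (ψ : (Fin n → ZMod d) → ℂ) (hψ : ∑ f, ‖ψ f‖ ^ 2 = 1) :
    (((d : ℝ) ^ n)⁻¹ * ∑ a : Fin n → ZMod d × ZMod d,
        ‖(pauliString d n a * outerProd ψ).trace‖) ^ 2 *
      (∑ a : Fin n → ZMod d × ZMod d,
        ‖(pauliString d n a * outerProd ψ).trace‖ ^ 4) ≥ (d : ℝ) ^ n := by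
  set t : (Fin n → ZMod d × ZMod d) → ℝ :=
    fun a => ‖(pauliString d n a * outerProd ψ).trace‖ with ht
  have htnn : ∀ a, 0 ≤ t a := fun a => norm_nonneg _
  set D : ℝ := (d : ℝ) ^ n with hD
  have hDpos : 0 < D := by positivity
  set A : ℝ := ∑ a, t a with hA
  set B : ℝ := ∑ a, t a ^ 4 with hB
  set C : ℝ := ∑ a, t a ^ 3 with hC
  have hS2 : ∑ a, t a ^ 2 = D := sum_abs_sq d n ψ hψ
  have hAnn : 0 ≤ A := Finset.sum_nonneg fun a _ => htnn a
  have hBnn : 0 ≤ B := Finset.sum_nonneg fun a _ => by positivity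
  have hCnn : 0 ≤ C := Finset.sum_nonneg fun a _ => by positivity
  have cs1 : D ^ 2 ≤ A * C := by
    have h := Finset.sum_mul_sq_le_sq_mul_sq Finset.univ
      (fun a => Real.sqrt (t a)) (fun a => t a * Real.sqrt (t a))
    have h1 : ∀ a : Fin n → ZMod d × ZMod d,
        Real.sqrt (t a) * (t a * Real.sqrt (t a)) = t a ^ 2 := by
      intro a
      rw [show Real.sqrt (t a) * (t a * Real.sqrt (t a))
          = (Real.sqrt (t a) * Real.sqrt (t a)) * t a by ring,
        Real.mul_self_sqrt (htnn a)]
      ring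
    have h2 : ∀ a : Fin n → ZMod d × ZMod d, Real.sqrt (t a) ^ 2 = t a :=
      fun a => Real.sq_sqrt (htnn a)
    have h3 : ∀ a : Fin n → ZMod d × ZMod d, (t a * Real.sqrt (t a)) ^ 2 = t a ^ 3 := by
      intro a
      rw [mul_pow, h2]
      ring
    simp only [h1, h2, h3] at h
    rwa [hS2] at h
  have cs2 : C ^ 2 ≤ D * B := by
    have h := Finset.sum_mul_sq_le_sq_mul_sq Finset.univ
      (fun a => t a) (fun a => t a ^ 2)
    have h1 : ∀ a : Fin n → ZMod d × ZMod d, t a * t a ^ 2 = t a ^ 3 := fun a => by ring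
    have h2 : ∀ a : Fin n → ZMod d × ZMod d, (t a ^ 2) ^ 2 = t a ^ 4 := fun a => by ring
    simp only [h1, h2] at h
    rwa [hS2] at h
  have key : D ^ 3 ≤ A ^ 2 * B := by
    have h4 : D ^ 4 ≤ A ^ 2 * D * B := by
      have ha : (D ^ 2) ^ 2 ≤ (A * C) ^ 2 := by
        apply pow_le_pow_left₀ (by positivity) cs1
      have hb : A ^ 2 * C ^ 2 ≤ A ^ 2 * (D * B) :=
        mul_le_mul_of_nonneg_left cs2 (sq_nonneg A)
      calc D ^ 4 = (D ^ 2) ^ 2 := by ring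
        _ ≤ (A * C) ^ 2 := ha
        _ = A ^ 2 * C ^ 2 := by ring
        _ ≤ A ^ 2 * (D * B) := hb
        _ = A ^ 2 * D * B := by ring
    by_contra hcon
    push_neg at hcon
    have : A ^ 2 * B * D < D ^ 3 * D := mul_lt_mul_of_pos_right hcon hDpos
    nlinarith
  have heq : (D⁻¹ * A) ^ 2 * B = A ^ 2 * B / D ^ 2 := by
    field_simp
  rw [heq, ge_iff_le, le_div_iff₀ (by positivity)]
  nlinarith [key]
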